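/- Discrete bootstrap lemma (core of the proof of Theorem 4.4): Let C > 0, let r ≥ 3 be an integer, let A ∈ [0,1] and ε ∈ (0,1]. Let (N_n)_{n≥0} be a sequence of nonnegative real numbers with N_0 ≤ ε² such that for every n, if N_n ≤ (9/4)ε² then |N_{n+1} − N_n| ≤ C·(A·N_n^{3/2} + N_n^{(r+1)/2}). Then there exists a constant c > 0 depending only on C and r (for instance c = 5/(4C(3/2)^{r+1})) such that N_n ≤ (9/4)ε² for every integer n with n ≤ c/(Aε + ε^{r−1}). -/

import Mathlib

/-- Discrete bootstrap lemma, core of the proof of Theorem 4.4.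
If `(N_n)` is a nonnegative sequence with `N_0 ≤ ε²` and
`|N_{n+1} − N_n| ≤ C (A N_n^{3/2} + N_n^{(r+1)/2})` whenever `N_n ≤ (9/4)ε²`, then with
`c = 5/(4C(3/2)^{r+1})` one has `N_n ≤ (9/4)ε²` for all `n ≤ c/(Aε + ε^{r-1})`. -/
theorem discrete_bootstrap
    (C : ℝ) (hC : 0 < C) (r : ℕ) (hr : 3 ≤ r)
    (A : ℝ) (hA0 : 0 ≤ A) (hA1 : A ≤ 1) (ε : ℝ) (hε0 : 0 < ε) (hε1 : ε ≤ 1)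
    (N : ℕ → ℝ) (hNpos : ∀ n, 0 ≤ N n) (hN0 : N 0 ≤ ε ^ 2)
    (hNstep : ∀ n, N n ≤ 9 / 4 * ε ^ 2 →
      |N (n + 1) - N n| ≤ C * (A * N n ^ ((3 : ℝ) / 2) + N n ^ (((r : ℝ) + 1) / 2))) :
    ∀ n : ℕ,
      (n : ℝ) ≤ (5 / (4 * C * (3 / 2 : ℝ) ^ (r + 1))) / (A * ε + ε ^ (r - 1)) →
      N n ≤ 9 / 4 * ε ^ 2 := by
  intro n hn
  set s : ℝ := A * ε + ε ^ (r - 1) with hs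
  set c : ℝ := 5 / (4 * C * (3 / 2 : ℝ) ^ (r + 1)) with hc
  have hεr : 0 < ε ^ (r - 1) := pow_pos hε0 _
  have hspos : 0 < s := by
    have : 0 ≤ A * ε := mul_nonneg hA0 hε0.le
    rw [hs]; linarith
  have hp : (0:ℝ) < (3 / 2 : ℝ) ^ (r + 1) := by positivity
  set D : ℝ := C * (3 / 2 : ℝ) ^ (r + 1) * s * ε ^ 2 with hD
  have hDpos : 0 < D := by
    have := sq_nonneg ε
    rw [hD]; positivity
  have hcD : (c / s) * D = 5 / 4 * ε ^ 2 := by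
    rw [hc, hD]
    field_simp
  -- auxiliary: bound on the step whenever N k ≤ 9/4 ε²
  have hx0 : (0:ℝ) ≤ 3 / 2 * ε := by positivity
  have hεr1 : ε ^ (r + 1) = ε ^ (r - 1) * ε ^ 2 := by
    rw [← pow_add]; congr 1; omega
  have key : ∀ m : ℕ, (m : ℝ) ≤ c / s → N m ≤ ε ^ 2 + m * D := by
    intro m
    induction m with
    | zero => intro _; simp; linarith
    | succ k ih =>
      intro hk
      have hk' : (k : ℝ) ≤ c / s := le_trans (by push_cast; linarith) hk
      have hNk := ih hk'
      have hkD : (k : ℝ) * D ≤ 5 / 4 * ε ^ 2 := by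
        calc (k : ℝ) * D ≤ (c / s) * D := by
              exact mul_le_mul_of_nonneg_right hk' hDpos.le
          _ = 5 / 4 * ε ^ 2 := hcD
      have hbound : N k ≤ 9 / 4 * ε ^ 2 := by linarith
      have hstep := hNstep k hbound
      -- bound the rpow terms
      have hbx : N k ≤ (3 / 2 * ε) ^ 2 := by nlinarith
      have e1 : ((3 / 2 * ε) ^ 2 : ℝ) ^ ((3:ℝ)/2) = (3 / 2 * ε) ^ 3 := by
        rw [← Real.rpow_natCast (3 / 2 * ε) 2, ← Real.rpow_mul hx0,
          show ((2:ℕ):ℝ) * ((3:ℝ)/2) = ((3:ℕ):ℝ) by norm_num,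
          Real.rpow_natCast]
      have e2 : ((3 / 2 * ε) ^ 2 : ℝ) ^ (((r:ℝ)+1)/2) = (3 / 2 * ε) ^ (r + 1) := by
        rw [← Real.rpow_natCast (3 / 2 * ε) 2, ← Real.rpow_mul hx0,
          show ((2:ℕ):ℝ) * (((r:ℝ)+1)/2) = ((r+1:ℕ):ℝ) by push_cast; ring,
          Real.rpow_natCast]
      have h1 : N k ^ ((3:ℝ)/2) ≤ (3 / 2 * ε) ^ 3 := by
        rw [← e1]
        exact Real.rpow_le_rpow (hNpos k) hbx (by norm_num)
      have h2 : N k ^ (((r:ℝ)+1)/2) ≤ (3 / 2 * ε) ^ (r + 1) := by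
        rw [← e2]
        refine Real.rpow_le_rpow (hNpos k) hbx ?_
        positivity
      have hpow : ((3:ℝ)/2) ^ 3 ≤ ((3:ℝ)/2) ^ (r + 1) :=
        pow_le_pow_right₀ (by norm_num) (by omega)
      have hsum : A * N k ^ ((3:ℝ)/2) + N k ^ (((r:ℝ)+1)/2)
          ≤ (3 / 2 : ℝ) ^ (r + 1) * s * ε ^ 2 := by
        have hA3 : A * N k ^ ((3:ℝ)/2) ≤ (3 / 2 : ℝ) ^ (r + 1) * (A * ε ^ 3) := by
          have : A * N k ^ ((3:ℝ)/2) ≤ A * ((3/2*ε) ^ 3) :=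
            mul_le_mul_of_nonneg_left h1 hA0
          have hε3 : (0:ℝ) ≤ ε ^ 3 := by positivity
          calc A * N k ^ ((3:ℝ)/2) ≤ A * ((3/2*ε) ^ 3) := this
            _ = ((3:ℝ)/2) ^ 3 * (A * ε ^ 3) := by ring
            _ ≤ (3 / 2 : ℝ) ^ (r + 1) * (A * ε ^ 3) := by
                exact mul_le_mul_of_nonneg_right hpow (by positivity)
        have h2' : N k ^ (((r:ℝ)+1)/2) ≤ (3 / 2 : ℝ) ^ (r + 1) * ε ^ (r + 1) := by
          calc N k ^ (((r:ℝ)+1)/2) ≤ (3 / 2 * ε) ^ (r + 1) := h2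
            _ = (3 / 2 : ℝ) ^ (r + 1) * ε ^ (r + 1) := mul_pow _ _ _
        calc A * N k ^ ((3:ℝ)/2) + N k ^ (((r:ℝ)+1)/2)
            ≤ (3 / 2 : ℝ) ^ (r + 1) * (A * ε ^ 3) + (3 / 2 : ℝ) ^ (r + 1) * ε ^ (r + 1) := by
              linarith
          _ = (3 / 2 : ℝ) ^ (r + 1) * (A * ε * ε ^ 2 + ε ^ (r - 1) * ε ^ 2) := by
              rw [hεr1]; ring
          _ = (3 / 2 : ℝ) ^ (r + 1) * s * ε ^ 2 := by rw [hs]; ring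
      have hstep' : N (k + 1) - N k ≤ D := by
        have habs := abs_le.mp hstep
        have : C * (A * N k ^ ((3:ℝ)/2) + N k ^ (((r:ℝ)+1)/2)) ≤ D := by
          rw [hD]
          calc C * (A * N k ^ ((3:ℝ)/2) + N k ^ (((r:ℝ)+1)/2))
              ≤ C * ((3 / 2 : ℝ) ^ (r + 1) * s * ε ^ 2) :=
                mul_le_mul_of_nonneg_left hsum hC.le
            _ = C * (3 / 2 : ℝ) ^ (r + 1) * s * ε ^ 2 := by ring
        linarith [habs.2]
      have : N (k + 1) ≤ N k + D := by linarith
      push_cast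
      linarith
  have hNn := key n hn
  have hnD : (n : ℝ) * D ≤ 5 / 4 * ε ^ 2 := by
    calc (n : ℝ) * D ≤ (c / s) * D := mul_le_mul_of_nonneg_right hn hDpos.le
      _ = 5 / 4 * ε ^ 2 := hcD
  linarith
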